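/- Let N ≥ 3, N < t < ∞, σ ∈ ℝ, and let β^- ∈ ℝ satisfy β^- + σ < 0. Suppose b : (0,1) → ℝ is measurable and there is a constant M such that ∫_s^{2s} |b(τ)|^t dτ ≤ M s^{1 - t(2+σ)} for all 0 < s ≤ 1/2. Then ∫_0^1 |b(τ)| / τ^{β^- - 1} dτ < ∞. -/

import Mathlib

open Real MeasureTheory

/-- Dyadic estimate: the variation-of-parameters integrand is integrable on (0,1). -/
theorem dyadic_integrability (N : ℕ) (hN : 3 ≤ N) (t σ β M : ℝ) (ht : (N : ℝ) < t)
    (hβ : β + σ < 0) (b : ℝ → ℝ) (hb : Measurable b)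
    (hbd : ∀ s : ℝ, 0 < s → s ≤ 1 / 2 →
      ∫⁻ τ in Set.Ioc s (2 * s), ENNReal.ofReal (|b τ| ^ t) ≤
        ENNReal.ofReal (M * s ^ (1 - t * (2 + σ)))) :
    ∫⁻ τ in Set.Ioo (0:ℝ) 1, ENNReal.ofReal (|b τ| / τ ^ (β - 1)) < ⊤ := by
  classical
  have ht1 : (1:ℝ) < t := by
    have h3 : (3:ℝ) ≤ (N:ℝ) := by exact_mod_cast hN
    linarith
  have ht0 : (0:ℝ) < t := by linarith
  set q : ℝ := t / (t - 1) with hqdef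
  have hpq : t.HolderConjugate q := Real.HolderConjugate.conjExponent ht1
  have hq_eq : 1 / q = 1 - 1 / t := by
    rw [hqdef]
    field_simp
  set M' : ℝ := max M 0 with hM'def
  have hM'0 : (0:ℝ) ≤ M' := le_max_right _ _
  set K : ℝ := max 1 ((2:ℝ) ^ (1 - β)) with hKdef
  have hK1 : (1:ℝ) ≤ K := le_max_left _ _
  have hK0 : (0:ℝ) ≤ K := le_trans zero_le_one hK1
  set C : ℝ := K * M' ^ (1 / t) with hCdef
  have hC0 : (0:ℝ) ≤ C := mul_nonneg hK0 (Real.rpow_nonneg hM'0 _)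
  set r : ℝ := (2:ℝ) ^ (β + σ) with hrdef
  have hr0 : (0:ℝ) < r := Real.rpow_pos_of_pos two_pos _
  have hr1 : r < 1 := Real.rpow_lt_one_of_one_lt_of_neg one_lt_two hβ
  -- the covering
  have hcover : Set.Ioo (0:ℝ) 1 ⊆
      ⋃ i : ℕ, Set.Ioc ((1/2:ℝ) ^ (i+1)) ((1/2:ℝ) ^ i) := by
    intro x hx
    have hx0 : (0:ℝ) < x := hx.1
    have hx1 : x < 1 := hx.2
    have hP : ∃ n : ℕ, (1/2:ℝ) ^ n < x :=
      exists_pow_lt_of_lt_one hx0 (by norm_num)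
    have hk : (1/2:ℝ) ^ (Nat.find hP) < x := Nat.find_spec hP
    have hk0 : Nat.find hP ≠ 0 := by
      intro h
      rw [h] at hk
      simp at hk
      linarith
    obtain ⟨m, hm⟩ := Nat.exists_eq_succ_of_ne_zero hk0
    have hmin : ¬ ((1/2:ℝ) ^ m < x) := Nat.find_min hP (by omega)
    refine Set.mem_iUnion.2 ⟨m, ?_, not_lt.1 hmin⟩
    rw [hm] at hk
    exact hk
  -- per-annulus estimate
  have key : ∀ i : ℕ,
      ∫⁻ τ in Set.Ioc ((1/2:ℝ) ^ (i+1)) ((1/2:ℝ) ^ i),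
        ENNReal.ofReal (|b τ| / τ ^ (β - 1)) ≤ ENNReal.ofReal (C * r ^ (i+1)) := by
    intro i
    set s : ℝ := (1/2:ℝ) ^ (i+1) with hsdef
    have hs0 : (0:ℝ) < s := by positivity
    have hs_half : s ≤ 1 / 2 := by
      calc s ≤ (1/2:ℝ) ^ 1 := pow_le_pow_of_le_one (by norm_num) (by norm_num) (by omega)
      _ = 1 / 2 := pow_one _
    have h2s : (1/2:ℝ) ^ i = 2 * s := by
      rw [hsdef, pow_succ]; ring
    rw [h2s]
    -- pointwise bound on the annulus
    have hpt : ∀ τ ∈ Set.Ioc s (2 * s),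
        ENNReal.ofReal (|b τ| / τ ^ (β - 1)) ≤
          ENNReal.ofReal (K * s ^ (1 - β)) * ENNReal.ofReal (|b τ|) := by
      intro τ hτ
      have hτ0 : (0:ℝ) < τ := lt_trans hs0 hτ.1
      have hdiv : |b τ| / τ ^ (β - 1) = |b τ| * τ ^ (1 - β) := by
        have : τ ^ (β - 1) = (τ ^ (1 - β))⁻¹ := by
          rw [← Real.rpow_neg hτ0.le]
          ring_nf
        rw [this, div_inv_eq_mul]
      have hbound : τ ^ (1 - β) ≤ K * s ^ (1 - β) := by
        rcases le_or_gt 0 (1 - β) with h1β | h1β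
        · have h1 : τ ^ (1 - β) ≤ (2 * s) ^ (1 - β) :=
            Real.rpow_le_rpow hτ0.le hτ.2 h1β
          have h2 : (2 * s) ^ (1 - β) = (2:ℝ) ^ (1 - β) * s ^ (1 - β) :=
            Real.mul_rpow (by norm_num) hs0.le
          have h3 : (2:ℝ) ^ (1 - β) ≤ K := le_max_right _ _
          calc τ ^ (1 - β) ≤ (2:ℝ) ^ (1 - β) * s ^ (1 - β) := by rw [← h2]; exact h1
          _ ≤ K * s ^ (1 - β) :=
            mul_le_mul_of_nonneg_right h3 (Real.rpow_nonneg hs0.le _)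
        · have h1 : τ ^ (1 - β) ≤ s ^ (1 - β) :=
            Real.rpow_le_rpow_of_nonpos hs0 hτ.1.le h1β.le
          calc τ ^ (1 - β) ≤ s ^ (1 - β) := h1
          _ ≤ K * s ^ (1 - β) :=
            le_mul_of_one_le_left (Real.rpow_nonneg hs0.le _) hK1
      rw [hdiv, ← ENNReal.ofReal_mul (mul_nonneg hK0 (Real.rpow_nonneg hs0.le _))]
      apply ENNReal.ofReal_le_ofReal
      calc |b τ| * τ ^ (1 - β) ≤ |b τ| * (K * s ^ (1 - β)) :=
        mul_le_mul_of_nonneg_left hbound (abs_nonneg _)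
      _ = K * s ^ (1 - β) * |b τ| := by ring
    -- Hölder
    have hold : ∫⁻ τ in Set.Ioc s (2 * s), ENNReal.ofReal (|b τ|) ≤
        (∫⁻ τ in Set.Ioc s (2 * s), ENNReal.ofReal (|b τ|) ^ t) ^ (1 / t) *
          (volume (Set.Ioc s (2 * s))) ^ (1 / q) := by
      have := ENNReal.lintegral_mul_le_Lp_mul_Lq (volume.restrict (Set.Ioc s (2 * s))) hpq
        (f := fun τ => ENNReal.ofReal (|b τ|)) (g := fun _ => 1)
        (hb.abs.ennreal_ofReal.aemeasurable) aemeasurable_const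
      simpa [ENNReal.one_rpow, Measure.restrict_apply MeasurableSet.univ] using this
    -- the L^t factor
    have hLt : (∫⁻ τ in Set.Ioc s (2 * s), ENNReal.ofReal (|b τ|) ^ t) ^ (1 / t) ≤
        (ENNReal.ofReal (M' * s ^ (1 - t * (2 + σ)))) ^ (1 / t) := by
      apply ENNReal.rpow_le_rpow _ (by positivity)
      have heq : ∀ τ : ℝ, ENNReal.ofReal (|b τ|) ^ t = ENNReal.ofReal (|b τ| ^ t) := by
        intro τ
        rw [ENNReal.ofReal_rpow_of_nonneg (abs_nonneg _) ht0.le]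
      calc ∫⁻ τ in Set.Ioc s (2 * s), ENNReal.ofReal (|b τ|) ^ t
          = ∫⁻ τ in Set.Ioc s (2 * s), ENNReal.ofReal (|b τ| ^ t) := by simp_rw [heq]
        _ ≤ ENNReal.ofReal (M * s ^ (1 - t * (2 + σ))) := hbd s hs0 hs_half
        _ ≤ ENNReal.ofReal (M' * s ^ (1 - t * (2 + σ))) := by
            apply ENNReal.ofReal_le_ofReal
            exact mul_le_mul_of_nonneg_right (le_max_left _ _) (Real.rpow_nonneg hs0.le _)
    have hvol : volume (Set.Ioc s (2 * s)) = ENNReal.ofReal s := by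
      rw [Real.volume_Ioc]
      congr 1
      ring
    -- assemble
    have hmain : ∫⁻ τ in Set.Ioc s (2 * s), ENNReal.ofReal (|b τ| / τ ^ (β - 1)) ≤
        ENNReal.ofReal (K * s ^ (1 - β)) *
          ((ENNReal.ofReal (M' * s ^ (1 - t * (2 + σ)))) ^ (1 / t) *
            (ENNReal.ofReal s) ^ (1 / q)) := by
      calc ∫⁻ τ in Set.Ioc s (2 * s), ENNReal.ofReal (|b τ| / τ ^ (β - 1))
          ≤ ∫⁻ τ in Set.Ioc s (2 * s),
              ENNReal.ofReal (K * s ^ (1 - β)) * ENNReal.ofReal (|b τ|) := by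
            apply setLIntegral_mono' measurableSet_Ioc hpt
        _ = ENNReal.ofReal (K * s ^ (1 - β)) *
              ∫⁻ τ in Set.Ioc s (2 * s), ENNReal.ofReal (|b τ|) :=
            lintegral_const_mul' _ _ ENNReal.ofReal_ne_top
        _ ≤ ENNReal.ofReal (K * s ^ (1 - β)) *
              ((ENNReal.ofReal (M' * s ^ (1 - t * (2 + σ)))) ^ (1 / t) *
                (ENNReal.ofReal s) ^ (1 / q)) := by
            apply mul_le_mul_of_nonneg_left _ zero_le
            calc ∫⁻ τ in Set.Ioc s (2 * s), ENNReal.ofReal (|b τ|)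
                ≤ (∫⁻ τ in Set.Ioc s (2 * s), ENNReal.ofReal (|b τ|) ^ t) ^ (1 / t) *
                  (volume (Set.Ioc s (2 * s))) ^ (1 / q) := hold
              _ ≤ (ENNReal.ofReal (M' * s ^ (1 - t * (2 + σ)))) ^ (1 / t) *
                  (ENNReal.ofReal s) ^ (1 / q) := by
                  rw [hvol]
                  exact mul_le_mul_of_nonneg_right hLt zero_le
    -- convert RHS to a single ofReal and compute the real number
    have hq0 : (0:ℝ) ≤ 1 / q := hpq.symm.one_div_nonneg
    have ht0' : (0:ℝ) ≤ 1 / t := hpq.one_div_nonneg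
    have hfinal : K * s ^ (1 - β) * ((M' * s ^ (1 - t * (2 + σ))) ^ (1 / t) * s ^ (1 / q)) =
        C * r ^ (i + 1) := by
      have h1 : (M' * s ^ (1 - t * (2 + σ))) ^ (1 / t) =
          M' ^ (1 / t) * s ^ ((1 - t * (2 + σ)) * (1 / t)) := by
        rw [Real.mul_rpow hM'0 (Real.rpow_nonneg hs0.le _), ← Real.rpow_mul hs0.le]
      have hhr : (1 / 2 : ℝ) ^ (-(β + σ)) = r := by
        rw [hrdef, one_div, Real.inv_rpow (by norm_num : (0:ℝ) ≤ 2),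
          Real.rpow_neg (by norm_num : (0:ℝ) ≤ 2), inv_inv]
      have hsr : s ^ (-(β + σ)) = r ^ (i + 1) := by
        rw [← hhr, ← Real.rpow_natCast ((1 / 2 : ℝ) ^ (-(β + σ))) (i + 1),
          ← Real.rpow_mul (by norm_num : (0:ℝ) ≤ 1 / 2), hsdef,
          ← Real.rpow_natCast ((1 / 2 : ℝ)) (i + 1),
          ← Real.rpow_mul (by norm_num : (0:ℝ) ≤ 1 / 2), mul_comm]
      calc K * s ^ (1 - β) * ((M' * s ^ (1 - t * (2 + σ))) ^ (1 / t) * s ^ (1 / q))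
          = C * (s ^ (1 - β) * s ^ ((1 - t * (2 + σ)) * (1 / t)) * s ^ (1 / q)) := by
            rw [h1, hCdef]; ring
        _ = C * s ^ ((1 - β) + (1 - t * (2 + σ)) * (1 / t) + 1 / q) := by
            rw [Real.rpow_add hs0, Real.rpow_add hs0]
        _ = C * s ^ (-(β + σ)) := by
            have hexp : (1 - β) + (1 - t * (2 + σ)) * (1 / t) + 1 / q = -(β + σ) := by
              rw [hq_eq]
              field_simp
              ring
            rw [hexp]
        _ = C * r ^ (i + 1) := by rw [hsr]
    have hrhs : ENNReal.ofReal (K * s ^ (1 - β)) *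
          ((ENNReal.ofReal (M' * s ^ (1 - t * (2 + σ)))) ^ (1 / t) *
            (ENNReal.ofReal s) ^ (1 / q)) = ENNReal.ofReal (C * r ^ (i+1)) := by
      rw [ENNReal.ofReal_rpow_of_nonneg (mul_nonneg hM'0 (Real.rpow_nonneg hs0.le _)) ht0',
          ENNReal.ofReal_rpow_of_nonneg hs0.le hq0,
          ← ENNReal.ofReal_mul (Real.rpow_nonneg
            (mul_nonneg hM'0 (Real.rpow_nonneg hs0.le _)) _),
          ← ENNReal.ofReal_mul (mul_nonneg hK0 (Real.rpow_nonneg hs0.le _))]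
      exact congrArg ENNReal.ofReal hfinal
    rw [hrhs] at hmain
    exact hmain
  -- sum up
  calc ∫⁻ τ in Set.Ioo (0:ℝ) 1, ENNReal.ofReal (|b τ| / τ ^ (β - 1))
      ≤ ∫⁻ τ in ⋃ i : ℕ, Set.Ioc ((1/2:ℝ) ^ (i+1)) ((1/2:ℝ) ^ i),
          ENNReal.ofReal (|b τ| / τ ^ (β - 1)) := lintegral_mono_set hcover
    _ ≤ ∑' i : ℕ, ∫⁻ τ in Set.Ioc ((1/2:ℝ) ^ (i+1)) ((1/2:ℝ) ^ i),
          ENNReal.ofReal (|b τ| / τ ^ (β - 1)) := lintegral_iUnion_le _ _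
    _ ≤ ∑' i : ℕ, ENNReal.ofReal (C * r ^ (i+1)) := ENNReal.tsum_le_tsum key
    _ = ENNReal.ofReal C * ∑' i : ℕ, (ENNReal.ofReal r) ^ (i+1) := by
        simp_rw [ENNReal.ofReal_mul hC0, ENNReal.ofReal_pow hr0.le, ENNReal.tsum_mul_left]
    _ < ⊤ := by
        have hxr : ENNReal.ofReal r < 1 := by
          rw [← ENNReal.ofReal_one]
          exact ENNReal.ofReal_lt_ofReal_iff_of_nonneg hr0.le |>.2 hr1
        have : ∑' i : ℕ, (ENNReal.ofReal r) ^ (i+1) =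
            ENNReal.ofReal r * ∑' i : ℕ, (ENNReal.ofReal r) ^ i := by
          simp_rw [pow_succ']
          rw [ENNReal.tsum_mul_left]
        rw [this, ENNReal.tsum_geometric]
        refine ENNReal.mul_lt_top ENNReal.ofReal_lt_top ?_
        refine ENNReal.mul_lt_top ENNReal.ofReal_lt_top ?_
        rw [ENNReal.inv_lt_top]
        exact tsub_pos_of_lt hxr
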